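/- Let (𝓐, 𝓑) be a k-uniform recovering pair over a finite set X with 𝓐 and 𝓑 nonempty, let θ > 0, and for i ∈ X let a_i = |{A ∈ 𝓐 : i ∈ A}| / |𝓐| and b_i = |{B ∈ 𝓑 : i ∈ B}| / |𝓑|. Suppose that for every A ∈ 𝓐, B ∈ 𝓑, every P₁ ⊆ A \ B and every P₂ ⊆ B \ A, one has |𝓐_{A, A\B, P₁}| · |𝓑_{A, A\B}| ≤ θ^(−k) · |𝓐| · |𝓑| and |𝓑_{B, B\A, P₂}| · |𝓐_{B, B\A}| ≤ θ^(−k) · |𝓐| · |𝓑| (where in the second inequality the roles of 𝓐 and 𝓑 in the definition of the filtered pair are interchanged). Then log₂(|𝓐| · |𝓑|) ≤ ∑_{i ∈ X} g(a_i, b_i, θ), where g(x, y, t) = f(x, y, t) + f(y, x, t) and f(x, y, t) = x(1−y)h(x) + h(x(1−y)) − x log₂ t. -/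

import Mathlib

/-- `(𝓐, 𝓑)` is a recovering pair over the ground set `X`. -/
def IsRecoveringPair (X : Finset ℕ) (𝓐 𝓑 : Finset (Finset ℕ)) : Prop :=
  (∀ A ∈ 𝓐, A ⊆ X) ∧ (∀ B ∈ 𝓑, B ⊆ X) ∧
  (∀ A ∈ 𝓐, ∀ A' ∈ 𝓐, ∀ B ∈ 𝓑, ∀ B' ∈ 𝓑, A \ B = A' \ B' → A = A') ∧
  (∀ A ∈ 𝓐, ∀ A' ∈ 𝓐, ∀ B ∈ 𝓑, ∀ B' ∈ 𝓑, B \ A = B' \ A' → B = B')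

/-- `(𝓐, 𝓑)` is a `k`-uniform pair. -/
def IsUniformPair (k : ℕ) (𝓐 𝓑 : Finset (Finset ℕ)) : Prop :=
  (∀ A ∈ 𝓐, A.card = k) ∧ (∀ B ∈ 𝓑, B.card = k)

/-- The first family of the filtered pair: `{A \ C : A ∈ 𝓐, A ∩ S = P}`. -/
def filteredA (𝓐 : Finset (Finset ℕ)) (C S P : Finset ℕ) : Finset (Finset ℕ) :=
  (𝓐.filter fun A => A ∩ S = P).image fun A => A \ C

/-- The second family of the filtered pair: `{B \ C : B ∈ 𝓑, C \ B = S}`. -/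
def filteredB (𝓑 : Finset (Finset ℕ)) (C S : Finset ℕ) : Finset (Finset ℕ) :=
  (𝓑.filter fun B => C \ B = S).image fun B => B \ C

/-- The binary entropy function `h(p) = -p log₂ p - (1-p) log₂ (1-p)`
(with the conventions `h(0) = h(1) = 0`, automatic since `logb 2 0 = 0`). -/
noncomputable def binEnt (p : ℝ) : ℝ :=
  -(p * Real.logb 2 p) - (1 - p) * Real.logb 2 (1 - p)

/-- The function `f(x, y, t) = x(1-y)h(x) + h(x(1-y)) - x log₂ t`. -/
noncomputable def fFun (x y t : ℝ) : ℝ :=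
  x * (1 - y) * binEnt x + binEnt (x * (1 - y)) - x * Real.logb 2 t

/-- The function `g(x, y, t) = f(x, y, t) + f(y, x, t)`. -/
noncomputable def gFun (x y t : ℝ) : ℝ :=
  fFun x y t + fFun y x t


open Finset Real

/-- Jensen: if positive reals sum to at most `card`, the sum of their logs is `≤ 0`. -/
lemma sum_log_le_zero {ι : Type*} (s : Finset ι) (x : ι → ℝ)
    (hx : ∀ i ∈ s, 0 < x i) (hsum : ∑ i ∈ s, x i ≤ s.card) :
    ∑ i ∈ s, Real.log (x i) ≤ 0 := by
  rcases s.eq_empty_or_nonempty with rfl | hs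
  · simp
  have hn : (0:ℝ) < s.card := by
    exact_mod_cast Finset.card_pos.mpr hs
  have hgm := Real.geom_mean_le_arith_mean_weighted s (fun _ => (s.card : ℝ)⁻¹) x
    (fun i _ => by positivity)
    (by rw [Finset.sum_const, nsmul_eq_mul, mul_inv_cancel₀ hn.ne'])
    (fun i hi => (hx i hi).le)
  have hprodpos : 0 < ∏ i ∈ s, x i ^ ((s.card : ℝ)⁻¹) := by
    apply Finset.prod_pos
    intro i hi
    exact Real.rpow_pos_of_pos (hx i hi) _
  have harith : ∑ i ∈ s, (s.card : ℝ)⁻¹ * x i ≤ 1 := by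
    rw [← Finset.mul_sum]
    rw [inv_mul_le_iff₀ hn]
    linarith
  have hlog : Real.log (∏ i ∈ s, x i ^ ((s.card : ℝ)⁻¹)) ≤ 0 := by
    calc Real.log (∏ i ∈ s, x i ^ ((s.card : ℝ)⁻¹)) ≤ Real.log 1 :=
          Real.log_le_log hprodpos (hgm.trans harith) |>.trans_eq (by rw [])
      _ = 0 := Real.log_one
  have hexp : Real.log (∏ i ∈ s, x i ^ ((s.card : ℝ)⁻¹))
      = (s.card : ℝ)⁻¹ * ∑ i ∈ s, Real.log (x i) := by
    rw [Real.log_prod]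
    · rw [Finset.mul_sum]
      refine Finset.sum_congr rfl fun i hi => ?_
      rw [Real.log_rpow (hx i hi), mul_comm]
    · intro i hi
      exact (Real.rpow_pos_of_pos (hx i hi) _).ne'
  rw [hexp] at hlog
  by_contra hcon
  push_neg at hcon
  nlinarith [mul_pos (inv_pos.mpr hn) hcon]

lemma sum_logb_le_zero {ι : Type*} (s : Finset ι) (x : ι → ℝ)
    (hx : ∀ i ∈ s, 0 < x i) (hsum : ∑ i ∈ s, x i ≤ s.card) :
    ∑ i ∈ s, Real.logb 2 (x i) ≤ 0 := by
  have h := sum_log_le_zero s x hx hsum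
  have : ∑ i ∈ s, Real.logb 2 (x i) = (∑ i ∈ s, Real.log (x i)) / Real.log 2 := by
    rw [Finset.sum_div]
    rfl
  rw [this]
  exact div_nonpos_of_nonpos_of_nonneg h (Real.log_pos one_lt_two).le

/-- Gibbs' inequality, counting form: if `w` is a subprobability weight positive on `s`,
then `card * logb card ≤ ∑ -logb w`. -/
lemma gibbs_count {ι : Type*} (s : Finset ι) (w : ι → ℝ)
    (hw : ∀ i ∈ s, 0 < w i) (hsum : ∑ i ∈ s, w i ≤ 1) :
    (s.card : ℝ) * Real.logb 2 s.card ≤ ∑ i ∈ s, (-Real.logb 2 (w i)) := by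
  rcases s.eq_empty_or_nonempty with rfl | hs
  · simp
  have hn : (0:ℝ) < s.card := by exact_mod_cast Finset.card_pos.mpr hs
  have key : ∑ i ∈ s, Real.logb 2 ((s.card : ℝ) * w i) ≤ 0 := by
    apply sum_logb_le_zero
    · intro i hi; exact mul_pos hn (hw i hi)
    · rw [← Finset.mul_sum]
      nlinarith
  have expand : ∀ i ∈ s, Real.logb 2 ((s.card : ℝ) * w i)
      = Real.logb 2 (s.card : ℝ) + Real.logb 2 (w i) := by
    intro i hi
    exact Real.logb_mul hn.ne' (hw i hi).ne'
  rw [Finset.sum_congr rfl expand, Finset.sum_add_distrib, Finset.sum_const, nsmul_eq_mul] at key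
  have : ∑ i ∈ s, Real.logb 2 (w i) = - ∑ i ∈ s, (-Real.logb 2 (w i)) := by
    rw [← Finset.sum_neg_distrib]; simp
  linarith [key, this]

/-- Fiberwise Gibbs: the "entropy" of a map `T` on a finset is at most the cross entropy
against any subprobability `q` on the image. -/
lemma gibbs_fiber {ι κ : Type*} [DecidableEq κ] (Ω : Finset ι) (T : ι → κ) (q : κ → ℝ)
    (hq : ∀ ω ∈ Ω, 0 < q (T ω))
    (hsum : ∑ s ∈ Ω.image T, q s ≤ 1) :
    ∑ ω ∈ Ω, Real.logb 2 ((Ω.card : ℝ) / (Ω.filter (fun ω' => T ω' = T ω)).card)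
      ≤ ∑ ω ∈ Ω, (-Real.logb 2 (q (T ω))) := by
  rcases Ω.eq_empty_or_nonempty with rfl | hΩ
  · simp
  have hn : (0:ℝ) < Ω.card := by exact_mod_cast Finset.card_pos.mpr hΩ
  have hfibpos : ∀ ω ∈ Ω, (0:ℝ) < (Ω.filter (fun ω' => T ω' = T ω)).card := by
    intro ω hω
    have : ω ∈ Ω.filter (fun ω' => T ω' = T ω) := Finset.mem_filter.mpr ⟨hω, rfl⟩
    exact_mod_cast Finset.card_pos.mpr ⟨ω, this⟩
  set fib : ι → ℝ := fun ω => ((Ω.filter (fun ω' => T ω' = T ω)).card : ℝ) with hfib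
  have key : ∑ ω ∈ Ω, Real.logb 2 ((Ω.card : ℝ) * q (T ω) / fib ω) ≤ 0 := by
    apply sum_logb_le_zero
    · intro ω hω
      exact div_pos (mul_pos hn (hq ω hω)) (hfibpos ω hω)
    · -- ∑ card * q(Tω) / fib ω ≤ card
      have hgroup : ∑ ω ∈ Ω, (Ω.card : ℝ) * q (T ω) / fib ω
          = ∑ s ∈ Ω.image T, ∑ ω ∈ Ω.filter (fun ω' => T ω' = s),
              (Ω.card : ℝ) * q (T ω) / fib ω := by
        rw [Finset.sum_fiberwise_of_maps_to (fun ω hω => Finset.mem_image_of_mem T hω)]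
      rw [hgroup]
      have hinner : ∀ s ∈ Ω.image T, ∑ ω ∈ Ω.filter (fun ω' => T ω' = s),
          (Ω.card : ℝ) * q (T ω) / fib ω = (Ω.card : ℝ) * q s := by
        intro s hs
        obtain ⟨ω₀, hω₀, rfl⟩ := Finset.mem_image.mp hs
        have hconst : ∀ ω ∈ Ω.filter (fun ω' => T ω' = T ω₀),
            (Ω.card : ℝ) * q (T ω) / fib ω
              = (Ω.card : ℝ) * q (T ω₀) / (Ω.filter (fun ω' => T ω' = T ω₀)).card := by
          intro ω hω
          obtain ⟨hωΩ, hT⟩ := Finset.mem_filter.mp hω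
          rw [hfib]
          simp only [hT]
        rw [Finset.sum_congr rfl hconst, Finset.sum_const, nsmul_eq_mul]
        have hne : ((Ω.filter (fun ω' => T ω' = T ω₀)).card : ℝ) ≠ 0 := (hfibpos ω₀ hω₀).ne'
        field_simp
      rw [Finset.sum_congr rfl hinner, ← Finset.mul_sum]
      nlinarith
  have expand : ∀ ω ∈ Ω, Real.logb 2 ((Ω.card : ℝ) * q (T ω) / fib ω)
      = Real.logb 2 ((Ω.card : ℝ) / fib ω) + Real.logb 2 (q (T ω)) := by
    intro ω hω
    rw [mul_comm ((Ω.card:ℝ)) (q (T ω)), mul_div_assoc]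
    rw [Real.logb_mul (hq ω hω).ne' (div_pos hn (hfibpos ω hω)).ne']
    ring
  rw [Finset.sum_congr rfl expand, Finset.sum_add_distrib] at key
  have : ∑ ω ∈ Ω, Real.logb 2 (q (T ω)) = - ∑ ω ∈ Ω, (-Real.logb 2 (q (T ω))) := by
    simp
  linarith [key]

lemma prod_ite_subset (X s : Finset ℕ) (hs : s ⊆ X) (f g : ℕ → ℝ) :
    ∏ i ∈ X, (if i ∈ s then f i else g i) = (∏ i ∈ s, f i) * ∏ i ∈ X \ s, g i := by
  calc ∏ i ∈ X, (if i ∈ s then f i else g i)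
      = ∏ i ∈ s ∪ (X \ s), (if i ∈ s then f i else g i) := by
        rw [Finset.union_sdiff_of_subset hs]
    _ = (∏ i ∈ s, (if i ∈ s then f i else g i))
        * ∏ i ∈ X \ s, (if i ∈ s then f i else g i) :=
        Finset.prod_union Finset.disjoint_sdiff
    _ = (∏ i ∈ s, f i) * ∏ i ∈ X \ s, g i := by
        congr 1
        · exact Finset.prod_congr rfl fun i hi => if_pos hi
        · exact Finset.prod_congr rfl fun i hi => if_neg (Finset.mem_sdiff.mp hi).2

lemma sum_powerset_prod_ite (X : Finset ℕ) (c : ℕ → ℝ) :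
    ∑ s ∈ X.powerset, ∏ i ∈ X, (if i ∈ s then c i else 1 - c i) = 1 := by
  have h := Finset.prod_add c (fun i => 1 - c i) X
  simp only [add_sub_cancel, Finset.prod_const_one] at h
  refine Eq.trans (Finset.sum_congr rfl fun t ht =>
    prod_ite_subset X t (Finset.mem_powerset.mp ht) c (fun i => 1 - c i)) h.symm

lemma sum_ite_const {ι : Type*} (s : Finset ι) (p : ι → Prop) [DecidablePred p] (u v : ℝ) :
    ∑ x ∈ s, (if p x then u else v)
      = ((s.filter p).card : ℝ) * u + ((s.card : ℝ) - ((s.filter p).card : ℝ)) * v := by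
  rw [Finset.sum_ite, Finset.sum_const, Finset.sum_const, nsmul_eq_mul, nsmul_eq_mul]
  have h := Finset.card_filter_add_card_filter_not (s := s) (p := p)
  have : ((s.filter fun x => ¬ p x).card : ℝ) = (s.card : ℝ) - ((s.filter p).card : ℝ) := by
    have := h
    push_cast [← this]
    ring
  rw [this]

lemma count_pair (𝓐 𝓑 : Finset (Finset ℕ)) (i : ℕ) :
    ((((𝓐 ×ˢ 𝓑).filter fun ω => i ∈ ω.1 \ ω.2).card : ℝ))
      = ((𝓐.filter fun A => i ∈ A).card : ℝ)
        * ((𝓑.card : ℝ) - ((𝓑.filter fun B => i ∈ B).card : ℝ)) := by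
  have hpred : ((𝓐 ×ˢ 𝓑).filter fun ω => i ∈ ω.1 \ ω.2)
      = ((𝓐 ×ˢ 𝓑).filter fun ω => (i ∈ ω.1) ∧ (i ∉ ω.2)) := by
    apply Finset.filter_congr
    intro ω _
    simp [Finset.mem_sdiff]
  rw [hpred]
  rw [Finset.filter_product (fun A => i ∈ A) (fun B => i ∉ B), Finset.card_product]
  have : ((𝓑.filter fun B => i ∉ B).card : ℝ)
      = (𝓑.card : ℝ) - ((𝓑.filter fun B => i ∈ B).card : ℝ) := by
    have h := Finset.card_filter_add_card_filter_not (s := 𝓑) (p := fun B => i ∈ B)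
    push_cast [← h]
    ring
  push_cast
  rw [this]

lemma bit_entropy {ι : Type*} (s : Finset ι) (p : ι → Prop) [DecidablePred p] (x : ℝ)
    (hx : ((s.filter p).card : ℝ) = x * s.card) :
    ∑ ω ∈ s, (-Real.logb 2 (if p ω then x else 1 - x)) = (s.card : ℝ) * binEnt x := by
  have : ∀ ω, (-Real.logb 2 (if p ω then x else 1 - x))
      = (if p ω then -Real.logb 2 x else -Real.logb 2 (1 - x)) := by
    intro ω; split <;> rfl
  simp only [this]
  rw [sum_ite_const, hx]
  unfold binEnt
  ring

lemma sdiff_eq_sdiff_inj {A B1 B2 : Finset ℕ} (h1 : B1 \ A = B2 \ A) (h2 : A \ B1 = A \ B2) :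
    B1 = B2 := by
  ext i
  have e1 := Finset.ext_iff.mp h1 i
  have e2 := Finset.ext_iff.mp h2 i
  simp only [Finset.mem_sdiff] at e1 e2
  by_cases hiA : i ∈ A <;> tauto

lemma sdiff_decomp (A1 A' B' : Finset ℕ) :
    A1 \ B' = (A1 ∩ (A' \ B')) ∪ ((A1 \ A') \ B') := by
  ext i
  simp only [Finset.mem_sdiff, Finset.mem_inter, Finset.mem_union]
  tauto

lemma card_filteredA (𝓐 𝓑 : Finset (Finset ℕ))
    (hrec3 : ∀ A ∈ 𝓐, ∀ A' ∈ 𝓐, ∀ B ∈ 𝓑, ∀ B' ∈ 𝓑, A \ B = A' \ B' → A = A')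
    {A' B' : Finset ℕ} (hA' : A' ∈ 𝓐) (hB' : B' ∈ 𝓑) (P : Finset ℕ) :
    (filteredA 𝓐 A' (A' \ B') P).card = (𝓐.filter fun A'' => A'' ∩ (A' \ B') = P).card := by
  apply Finset.card_image_of_injOn
  intro A1 h1 A2 h2 heq
  simp only [Finset.coe_filter, Set.mem_setOf_eq] at h1 h2
  have heq' : A1 \ A' = A2 \ A' := heq
  have key : A1 \ B' = A2 \ B' := by
    rw [sdiff_decomp A1 A' B', sdiff_decomp A2 A' B', h1.2, h2.2, heq']
  exact hrec3 A1 h1.1 A2 h2.1 B' hB' B' hB' key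

lemma card_filteredB (𝓑 : Finset (Finset ℕ)) (A' S : Finset ℕ) :
    (filteredB 𝓑 A' S).card = (𝓑.filter fun B'' => A' \ B'' = S).card := by
  apply Finset.card_image_of_injOn
  intro B1 h1 B2 h2 heq
  simp only [Finset.coe_filter, Set.mem_setOf_eq] at h1 h2
  exact sdiff_eq_sdiff_inj heq (h1.2.trans h2.2.symm)

lemma fiber_eq (𝓐 𝓑 : Finset (Finset ℕ))
    (hrec3 : ∀ A ∈ 𝓐, ∀ A' ∈ 𝓐, ∀ B ∈ 𝓑, ∀ B' ∈ 𝓑, A \ B = A' \ B' → A = A')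
    {A' B' : Finset ℕ} (hA' : A' ∈ 𝓐) (hB' : B' ∈ 𝓑) :
    ((𝓐 ×ˢ 𝓑).filter fun ω => ω.1 \ ω.2 = A' \ B')
      = {A'} ×ˢ (𝓑.filter fun B'' => A' \ B'' = A' \ B') := by
  ext ⟨x, y⟩
  simp only [Finset.mem_filter, Finset.mem_product, Finset.mem_singleton]
  constructor
  · rintro ⟨⟨hx, hy⟩, hxy⟩
    have hxA : x = A' := hrec3 x hx A' hA' y hy B' hB' hxy
    subst hxA
    tauto
  · intro h
    have hx : x = A' := by tauto
    subst hx
    refine ⟨⟨hA', ?_⟩, ?_⟩ <;> tauto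

lemma main_side (X : Finset ℕ) (𝓐 𝓑 : Finset (Finset ℕ)) (k : ℕ)
    (hXA : ∀ A ∈ 𝓐, A ⊆ X)
    (hcard : ∀ A ∈ 𝓐, A.card = k)
    (hrec3 : ∀ A ∈ 𝓐, ∀ A' ∈ 𝓐, ∀ B ∈ 𝓑, ∀ B' ∈ 𝓑, A \ B = A' \ B' → A = A')
    (hA : 𝓐.Nonempty) (hB : 𝓑.Nonempty) (θ : ℝ) (hθ : 0 < θ)
    (a b : ℕ → ℝ)
    (ha : ∀ i, a i = ((𝓐.filter fun A => i ∈ A).card : ℝ) / 𝓐.card)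
    (hb : ∀ i, b i = ((𝓑.filter fun B => i ∈ B).card : ℝ) / 𝓑.card)
    (hfil : ∀ A ∈ 𝓐, ∀ B ∈ 𝓑, ∀ P₁ ⊆ A \ B,
      ((filteredA 𝓐 A (A \ B) P₁).card * (filteredB 𝓑 A (A \ B)).card : ℝ)
        ≤ θ ^ (-(k : ℤ)) * (𝓐.card * 𝓑.card)) :
    Real.logb 2 𝓐.card ≤ ∑ i ∈ X, fFun (a i) (b i) θ := by
  classical
  set N : ℝ := (𝓐.card : ℝ) with hNdef
  set M : ℝ := (𝓑.card : ℝ) with hMdef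
  have hN : 0 < N := by rw [hNdef]; exact_mod_cast Finset.card_pos.mpr hA
  have hM : 0 < M := by rw [hMdef]; exact_mod_cast Finset.card_pos.mpr hB
  set c : ℕ → ℝ := fun i => a i * (1 - b i) with hcdef
  set Ω : Finset (Finset ℕ × Finset ℕ) := 𝓐 ×ˢ 𝓑 with hΩdef
  have hΩcard : (Ω.card : ℝ) = N * M := by
    rw [hΩdef, Finset.card_product]; push_cast; rfl
  set r : Finset ℕ → Finset ℕ → ℝ :=
    fun A S => ∏ i ∈ S, (if i ∈ A then a i else 1 - a i) with hrdef
  set n1 : Finset ℕ → Finset ℕ → Finset ℕ → ℕ :=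
    fun A' B' P => (𝓐.filter fun A'' => A'' ∩ (A' \ B') = P).card with hn1def
  set n2 : Finset ℕ → Finset ℕ → ℕ :=
    fun A' B' => (𝓑.filter fun B'' => A' \ B'' = A' \ B').card with hn2def
  -- basic facts
  have haN : ∀ i, ((𝓐.filter fun A => i ∈ A).card : ℝ) = a i * N := by
    intro i; rw [ha i]; field_simp
  have hbM : ∀ i, ((𝓑.filter fun B => i ∈ B).card : ℝ) = b i * M := by
    intro i; rw [hb i]; exact (div_mul_cancel₀ _ hM.ne').symm
  have ha0 : ∀ i, 0 ≤ a i := fun i => by rw [ha i]; exact div_nonneg (Nat.cast_nonneg _) hN.le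
  have ha1 : ∀ i, a i ≤ 1 := by
    intro i; rw [ha i]
    rw [div_le_one hN, hNdef]
    exact_mod_cast Finset.card_filter_le _ _
  have hb0 : ∀ i, 0 ≤ b i := fun i => by rw [hb i]; exact div_nonneg (Nat.cast_nonneg _) hM.le
  have hb1 : ∀ i, b i ≤ 1 := by
    intro i; rw [hb i]
    rw [div_le_one hM, hMdef]
    exact_mod_cast Finset.card_filter_le _ _
  have hc0 : ∀ i, 0 ≤ c i := fun i => mul_nonneg (ha0 i) (by linarith [hb1 i])
  have hc1 : ∀ i, c i ≤ 1 := by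
    intro i
    have := hb0 i
    have := ha1 i
    have := ha0 i
    calc c i ≤ a i * 1 := by
          apply mul_le_mul_of_nonneg_left _ (ha0 i); linarith
      _ ≤ 1 := by linarith
  have hapos : ∀ {i : ℕ} {A : Finset ℕ}, A ∈ 𝓐 → i ∈ A → 0 < a i := by
    intro i A hAm hiA
    have h1 : A ∈ 𝓐.filter fun A => i ∈ A := Finset.mem_filter.mpr ⟨hAm, hiA⟩
    have : (0:ℝ) < ((𝓐.filter fun A => i ∈ A).card : ℝ) := by
      exact_mod_cast Finset.card_pos.mpr ⟨A, h1⟩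
    rw [haN i] at this
    nlinarith
  have halt1 : ∀ {i : ℕ} {A : Finset ℕ}, A ∈ 𝓐 → i ∉ A → a i < 1 := by
    intro i A hAm hiA
    have hss : (𝓐.filter fun A => i ∈ A) ⊂ 𝓐 := by
      refine Finset.ssubset_iff_of_subset (Finset.filter_subset _ _) |>.mpr ?_
      exact ⟨A, hAm, fun hc => hiA (Finset.mem_filter.mp hc).2⟩
    have : ((𝓐.filter fun A => i ∈ A).card : ℝ) < N := by
      rw [hNdef]; exact_mod_cast Finset.card_lt_card hss
    rw [haN i] at this
    nlinarith
  have hfac : ∀ {A : Finset ℕ}, A ∈ 𝓐 → ∀ i, 0 < (if i ∈ A then a i else 1 - a i) := by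
    intro A hAm i
    split
    · exact hapos hAm ‹_›
    · have := halt1 hAm ‹_›; linarith
  have hcount : ∀ i, ((Ω.filter fun ω => i ∈ ω.1 \ ω.2).card : ℝ) = c i * (N * M) := by
    intro i
    rw [hΩdef, count_pair, haN i, hbM i, hcdef]
    ring
  -- Step A
  have stepA : ∀ A' ∈ 𝓐, ∀ B' ∈ 𝓑,
      N * Real.logb 2 N ≤ ∑ A ∈ 𝓐,
        (-Real.logb 2 (r A (A' \ B')) + Real.logb 2 (n1 A' B' (A ∩ (A' \ B')))) := by
    intro A' hA' B' hB'
    have hrpos : ∀ A ∈ 𝓐, 0 < r A (A' \ B') := by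
      intro A hAm
      rw [hrdef]
      exact Finset.prod_pos fun i _ => hfac hAm i
    have hn1p : ∀ A ∈ 𝓐, 0 < n1 A' B' (A ∩ (A' \ B')) := by
      intro A hAm
      rw [hn1def]
      exact Finset.card_pos.mpr ⟨A, Finset.mem_filter.mpr ⟨hAm, rfl⟩⟩
    have hn1pr : ∀ A ∈ 𝓐, (0:ℝ) < (n1 A' B' (A ∩ (A' \ B')) : ℝ) := by
      intro A hAm; exact_mod_cast hn1p A hAm
    set w : Finset ℕ → ℝ := fun A => r A (A' \ B') / n1 A' B' (A ∩ (A' \ B')) with hwdef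
    have hwpos : ∀ A ∈ 𝓐, 0 < w A := by
      intro A hAm
      exact div_pos (hrpos A hAm) (hn1pr A hAm)
    have hrP : ∀ A : Finset ℕ, r A (A' \ B')
        = ∏ i ∈ A' \ B', (if i ∈ A ∩ (A' \ B') then a i else 1 - a i) := by
      intro A
      rw [hrdef]
      refine Finset.prod_congr rfl fun i hi => ?_
      exact (if_congr (by simp [Finset.mem_inter, hi]) rfl rfl).symm
    have hrPnonneg : ∀ P : Finset ℕ,
        0 ≤ ∏ i ∈ A' \ B', (if i ∈ P then a i else 1 - a i) := by
      intro P
      refine Finset.prod_nonneg fun i _ => ?_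
      split
      · exact ha0 i
      · linarith [ha1 i]
    have hwsum : ∑ A ∈ 𝓐, w A ≤ 1 := by
      have hgrp : ∑ A ∈ 𝓐, w A = ∑ P ∈ (A' \ B').powerset,
          ∑ A ∈ 𝓐.filter (fun A => A ∩ (A' \ B') = P), w A :=
        (Finset.sum_fiberwise_of_maps_to
          (fun A _ => Finset.mem_powerset.mpr Finset.inter_subset_right) w).symm
      rw [hgrp]
      have hinner : ∀ P ∈ (A' \ B').powerset,
          ∑ A ∈ 𝓐.filter (fun A => A ∩ (A' \ B') = P), w A
            ≤ ∏ i ∈ A' \ B', (if i ∈ P then a i else 1 - a i) := by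
        intro P _
        have hconst : ∀ A ∈ 𝓐.filter (fun A => A ∩ (A' \ B') = P),
            w A = (∏ i ∈ A' \ B', (if i ∈ P then a i else 1 - a i))
              / ((𝓐.filter (fun A => A ∩ (A' \ B') = P)).card : ℝ) := by
          intro A hAf
          obtain ⟨hAm, hP⟩ := Finset.mem_filter.mp hAf
          rw [hwdef]
          simp only
          rw [hrP A, hP, hn1def]
        rw [Finset.sum_congr rfl hconst, Finset.sum_const, nsmul_eq_mul]
        rcases Nat.eq_zero_or_pos (𝓐.filter (fun A => A ∩ (A' \ B') = P)).card with h0 | hpos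
        · rw [h0]
          simpa using hrPnonneg P
        · have hne : ((𝓐.filter (fun A => A ∩ (A' \ B') = P)).card : ℝ) ≠ 0 := by
            exact_mod_cast hpos.ne'
          rw [mul_div_cancel₀ _ hne]
      calc ∑ P ∈ (A' \ B').powerset, ∑ A ∈ 𝓐.filter (fun A => A ∩ (A' \ B') = P), w A
          ≤ ∑ P ∈ (A' \ B').powerset, ∏ i ∈ A' \ B', (if i ∈ P then a i else 1 - a i) :=
            Finset.sum_le_sum hinner
        _ = 1 := sum_powerset_prod_ite (A' \ B') a
    have hg := gibbs_count 𝓐 w hwpos hwsum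
    have hexp : ∀ A ∈ 𝓐, -Real.logb 2 (w A)
        = -Real.logb 2 (r A (A' \ B')) + Real.logb 2 (n1 A' B' (A ∩ (A' \ B'))) := by
      intro A hAm
      rw [hwdef]
      simp only
      rw [Real.logb_div (hrpos A hAm).ne' (hn1pr A hAm).ne']
      ring
    rw [Finset.sum_congr rfl hexp] at hg
    exact hg
  -- Step B
  have stepB : ∑ ω ∈ Ω, ∑ A ∈ 𝓐, (-Real.logb 2 (r A (ω.1 \ ω.2)))
      = N * (N * M) * ∑ i ∈ X, c i * binEnt (a i) := by
    have hAsum : ∀ i : ℕ, ∑ A ∈ 𝓐, (-Real.logb 2 (if i ∈ A then a i else 1 - a i))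
        = N * binEnt (a i) := by
      intro i
      have h := bit_entropy 𝓐 (fun A => i ∈ A) (a i) (by rw [haN i, hNdef])
      rw [h, hNdef]
    have hlogr : ∀ ω ∈ Ω, ∀ A ∈ 𝓐, -Real.logb 2 (r A (ω.1 \ ω.2))
        = ∑ i ∈ ω.1 \ ω.2, (-Real.logb 2 (if i ∈ A then a i else 1 - a i)) := by
      intro ω hω A hAm
      rw [hrdef]
      simp only
      rw [Real.logb_prod _ _ (fun i _ => (hfac hAm i).ne')]
      rw [← Finset.sum_neg_distrib]
    calc ∑ ω ∈ Ω, ∑ A ∈ 𝓐, (-Real.logb 2 (r A (ω.1 \ ω.2)))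
        = ∑ ω ∈ Ω, ∑ A ∈ 𝓐, ∑ i ∈ ω.1 \ ω.2,
            (-Real.logb 2 (if i ∈ A then a i else 1 - a i)) :=
          Finset.sum_congr rfl fun ω hω => Finset.sum_congr rfl fun A hAm => hlogr ω hω A hAm
      _ = ∑ ω ∈ Ω, ∑ i ∈ ω.1 \ ω.2, ∑ A ∈ 𝓐,
            (-Real.logb 2 (if i ∈ A then a i else 1 - a i)) :=
          Finset.sum_congr rfl fun ω _ => Finset.sum_comm
      _ = ∑ ω ∈ Ω, ∑ i ∈ ω.1 \ ω.2, N * binEnt (a i) :=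
          Finset.sum_congr rfl fun ω _ => Finset.sum_congr rfl fun i _ => hAsum i
      _ = ∑ ω ∈ Ω, ∑ i ∈ X, (if i ∈ ω.1 \ ω.2 then N * binEnt (a i) else 0) := by
          refine Finset.sum_congr rfl fun ω hω => ?_
          obtain ⟨h1, h2⟩ := Finset.mem_product.mp (by rwa [hΩdef] at hω)
          rw [Finset.sum_ite_mem, Finset.inter_eq_right.mpr
            (Finset.sdiff_subset.trans (hXA ω.1 h1))]
      _ = ∑ i ∈ X, ∑ ω ∈ Ω, (if i ∈ ω.1 \ ω.2 then N * binEnt (a i) else 0) :=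
          Finset.sum_comm
      _ = ∑ i ∈ X, c i * (N * M) * (N * binEnt (a i)) := by
          refine Finset.sum_congr rfl fun i _ => ?_
          rw [sum_ite_const Ω (fun ω => i ∈ ω.1 \ ω.2) (N * binEnt (a i)) 0, hcount i]
          ring
      _ = N * (N * M) * ∑ i ∈ X, c i * binEnt (a i) := by
          rw [Finset.mul_sum]
          exact Finset.sum_congr rfl fun i _ => by ring
  -- Step C
  have stepC : ∀ ω ∈ Ω, ∀ A ∈ 𝓐,
      Real.logb 2 (n1 ω.1 ω.2 (A ∩ (ω.1 \ ω.2)))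
        ≤ Real.logb 2 (N * M) - k * Real.logb 2 θ - Real.logb 2 (n2 ω.1 ω.2) := by
    intro ω hω A hAm
    obtain ⟨h1, h2⟩ := Finset.mem_product.mp (by rwa [hΩdef] at hω)
    have hsub : A ∩ (ω.1 \ ω.2) ⊆ ω.1 \ ω.2 := Finset.inter_subset_right
    have h := hfil ω.1 h1 ω.2 h2 _ hsub
    rw [card_filteredA 𝓐 𝓑 hrec3 h1 h2, card_filteredB] at h
    have hn1p : 0 < n1 ω.1 ω.2 (A ∩ (ω.1 \ ω.2)) := by
      rw [hn1def]
      exact Finset.card_pos.mpr ⟨A, Finset.mem_filter.mpr ⟨hAm, rfl⟩⟩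
    have hn2p : 0 < n2 ω.1 ω.2 := by
      rw [hn2def]
      exact Finset.card_pos.mpr ⟨ω.2, Finset.mem_filter.mpr ⟨h2, rfl⟩⟩
    have hn1pr : (0:ℝ) < (n1 ω.1 ω.2 (A ∩ (ω.1 \ ω.2)) : ℝ) := by exact_mod_cast hn1p
    have hn2pr : (0:ℝ) < (n2 ω.1 ω.2 : ℝ) := by exact_mod_cast hn2p
    have h' : ((n1 ω.1 ω.2 (A ∩ (ω.1 \ ω.2)) : ℝ) * (n2 ω.1 ω.2 : ℝ))
        ≤ θ ^ (-(k : ℤ)) * (N * M) := by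
      rw [hn1def, hn2def]
      exact h
    have hlog := Real.logb_le_logb_of_le (b := 2) one_lt_two (mul_pos hn1pr hn2pr) h'
    rw [Real.logb_mul hn1pr.ne' hn2pr.ne'] at hlog
    rw [Real.logb_mul (zpow_pos hθ _).ne' (mul_pos hN hM).ne'] at hlog
    rw [zpow_neg, zpow_natCast, Real.logb_inv, Real.logb_pow] at hlog
    linarith
  -- Step D
  have stepD : ∑ ω ∈ Ω, (-Real.logb 2 (n2 ω.1 ω.2))
      ≤ (N * M) * ∑ i ∈ X, binEnt (c i) - (N * M) * Real.logb 2 (N * M) := by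
    set T : Finset ℕ × Finset ℕ → Finset ℕ := fun ω => ω.1 \ ω.2 with hTdef
    set qc : Finset ℕ → ℝ := fun s => ∏ i ∈ X, (if i ∈ s then c i else 1 - c i) with hqcdef
    have hcpos : ∀ ω ∈ Ω, ∀ i, i ∈ T ω → 0 < c i := by
      intro ω hω i hi
      have h1 : ω ∈ Ω.filter (fun ω' => i ∈ ω'.1 \ ω'.2) :=
        Finset.mem_filter.mpr ⟨hω, hi⟩
      have h2 : (0:ℝ) < ((Ω.filter fun ω' => i ∈ ω'.1 \ ω'.2).card : ℝ) := by
        exact_mod_cast Finset.card_pos.mpr ⟨ω, h1⟩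
      rw [hcount i] at h2
      nlinarith
    have hclt1 : ∀ ω ∈ Ω, ∀ i, i ∉ T ω → c i < 1 := by
      intro ω hω i hi
      have hss : (Ω.filter fun ω' => i ∈ ω'.1 \ ω'.2) ⊂ Ω := by
        refine Finset.ssubset_iff_of_subset (Finset.filter_subset _ _) |>.mpr ?_
        exact ⟨ω, hω, fun hc => hi (Finset.mem_filter.mp hc).2⟩
      have h2 : ((Ω.filter fun ω' => i ∈ ω'.1 \ ω'.2).card : ℝ) < (Ω.card : ℝ) := by
        exact_mod_cast Finset.card_lt_card hss
      rw [hcount i, hΩcard] at h2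
      nlinarith
    have hfacq : ∀ ω ∈ Ω, ∀ i, 0 < (if i ∈ T ω then c i else 1 - c i) := by
      intro ω hω i
      split
      · exact hcpos ω hω i ‹_›
      · have := hclt1 ω hω i ‹_›; linarith
    have hqpos : ∀ ω ∈ Ω, 0 < qc (T ω) := by
      intro ω hω
      rw [hqcdef]
      exact Finset.prod_pos fun i _ => hfacq ω hω i
    have hqsum : ∑ s ∈ Ω.image T, qc s ≤ 1 := by
      have himg : Ω.image T ⊆ X.powerset := by
        intro s hs
        obtain ⟨ω, hω, rfl⟩ := Finset.mem_image.mp hs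
        obtain ⟨h1, _⟩ := Finset.mem_product.mp (by rwa [hΩdef] at hω)
        exact Finset.mem_powerset.mpr (Finset.sdiff_subset.trans (hXA ω.1 h1))
      have hnn : ∀ s ∈ X.powerset, s ∉ Ω.image T → 0 ≤ qc s := by
        intro s _ _
        rw [hqcdef]
        refine Finset.prod_nonneg fun i _ => ?_
        split
        · exact hc0 i
        · linarith [hc1 i]
      calc ∑ s ∈ Ω.image T, qc s ≤ ∑ s ∈ X.powerset, qc s :=
            Finset.sum_le_sum_of_subset_of_nonneg himg hnn
        _ = 1 := sum_powerset_prod_ite X c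
    have hfib := gibbs_fiber Ω T qc hqpos hqsum
    have hn2p : ∀ ω ∈ Ω, (0:ℝ) < (n2 ω.1 ω.2 : ℝ) := by
      intro ω hω
      obtain ⟨_, h2⟩ := Finset.mem_product.mp (by rwa [hΩdef] at hω)
      have : 0 < n2 ω.1 ω.2 := by
        rw [hn2def]
        exact Finset.card_pos.mpr ⟨ω.2, Finset.mem_filter.mpr ⟨h2, rfl⟩⟩
      exact_mod_cast this
    have hfibcard : ∀ ω ∈ Ω, ((Ω.filter fun ω' => T ω' = T ω).card : ℝ) = (n2 ω.1 ω.2 : ℝ) := by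
      intro ω hω
      obtain ⟨h1, h2⟩ := Finset.mem_product.mp (by rwa [hΩdef] at hω)
      have heq : (Ω.filter fun ω' => T ω' = T ω)
          = {ω.1} ×ˢ (𝓑.filter fun B'' => ω.1 \ B'' = ω.1 \ ω.2) := by
        rw [hΩdef, hTdef]
        exact fiber_eq 𝓐 𝓑 hrec3 h1 h2
      rw [heq, Finset.card_product, Finset.card_singleton, one_mul, hn2def]
    have hLHS : ∑ ω ∈ Ω, Real.logb 2 ((Ω.card : ℝ) / (Ω.filter (fun ω' => T ω' = T ω)).card)
        = (N * M) * Real.logb 2 (N * M) - ∑ ω ∈ Ω, Real.logb 2 (n2 ω.1 ω.2) := by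
      have hterm : ∀ ω ∈ Ω, Real.logb 2 ((Ω.card : ℝ) / (Ω.filter (fun ω' => T ω' = T ω)).card)
          = Real.logb 2 (N * M) - Real.logb 2 (n2 ω.1 ω.2) := by
        intro ω hω
        rw [hfibcard ω hω, hΩcard]
        rw [Real.logb_div (mul_pos hN hM).ne' (hn2p ω hω).ne']
      rw [Finset.sum_congr rfl hterm, Finset.sum_sub_distrib, Finset.sum_const, nsmul_eq_mul,
        hΩcard]
    have hRHS : ∑ ω ∈ Ω, (-Real.logb 2 (qc (T ω))) = (N * M) * ∑ i ∈ X, binEnt (c i) := by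
      have hterm : ∀ ω ∈ Ω, -Real.logb 2 (qc (T ω))
          = ∑ i ∈ X, (-Real.logb 2 (if i ∈ T ω then c i else 1 - c i)) := by
        intro ω hω
        rw [hqcdef]
        simp only
        rw [Real.logb_prod _ _ (fun i _ => (hfacq ω hω i).ne')]
        rw [← Finset.sum_neg_distrib]
      rw [Finset.sum_congr rfl hterm, Finset.sum_comm]
      have hinner : ∀ i ∈ X, ∑ ω ∈ Ω, (-Real.logb 2 (if i ∈ T ω then c i else 1 - c i))
          = (N * M) * binEnt (c i) := by
        intro i _
        have h := bit_entropy Ω (fun ω => i ∈ T ω) (c i) ?_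
        · rw [h, hΩcard]
        · rw [hTdef, hcount i, hΩcard]
      rw [Finset.sum_congr rfl hinner, ← Finset.mul_sum]
    rw [hLHS, hRHS] at hfib
    have : ∑ ω ∈ Ω, (-Real.logb 2 ((n2 ω.1 ω.2 : ℕ) : ℝ))
        = -∑ ω ∈ Ω, Real.logb 2 ((n2 ω.1 ω.2 : ℕ) : ℝ) := by
      rw [← Finset.sum_neg_distrib]
    rw [this]
    linarith
  -- Step F
  have hsum_a : ∑ i ∈ X, a i = k := by
    have hterm : ∀ i ∈ X, ((𝓐.filter fun A => i ∈ A).card : ℝ)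
        = ∑ A ∈ 𝓐, (if i ∈ A then (1:ℝ) else 0) := by
      intro i _
      rw [Finset.card_filter]
      push_cast
      rfl
    have h1 : ∑ i ∈ X, ((𝓐.filter fun A => i ∈ A).card : ℝ) = N * k := by
      rw [Finset.sum_congr rfl hterm, Finset.sum_comm]
      have h2 : ∀ A ∈ 𝓐, ∑ i ∈ X, (if i ∈ A then (1:ℝ) else 0) = (k : ℝ) := by
        intro A hAm
        rw [Finset.sum_ite_mem, Finset.inter_eq_right.mpr (hXA A hAm), Finset.sum_const]
        rw [hcard A hAm]
        simp
      rw [Finset.sum_congr rfl h2, Finset.sum_const, nsmul_eq_mul, hNdef]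
    have h3 : ∑ i ∈ X, a i = (∑ i ∈ X, ((𝓐.filter fun A => i ∈ A).card : ℝ)) / N := by
      rw [Finset.sum_div]
      exact Finset.sum_congr rfl fun i _ => ha i
    rw [h3, h1]
    field_simp
  -- Combination
  have hsumA : (N * M) * (N * Real.logb 2 N) ≤ ∑ ω ∈ Ω, ∑ A ∈ 𝓐,
      (-Real.logb 2 (r A (ω.1 \ ω.2)) + Real.logb 2 (n1 ω.1 ω.2 (A ∩ (ω.1 \ ω.2)))) := by
    have h := Finset.sum_le_sum (s := Ω)
      (f := fun _ => N * Real.logb 2 N)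
      (g := fun ω => ∑ A ∈ 𝓐, (-Real.logb 2 (r A (ω.1 \ ω.2))
        + Real.logb 2 (n1 ω.1 ω.2 (A ∩ (ω.1 \ ω.2)))))
      (fun ω hω => by
        obtain ⟨h1, h2⟩ := Finset.mem_product.mp (by rwa [hΩdef] at hω)
        exact stepA ω.1 h1 ω.2 h2)
    rw [Finset.sum_const, nsmul_eq_mul] at h
    calc (N * M) * (N * Real.logb 2 N) = (Ω.card : ℝ) * (N * Real.logb 2 N) := by
          rw [hΩcard]
      _ ≤ _ := h
  have hsplit : ∑ ω ∈ Ω, ∑ A ∈ 𝓐,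
      (-Real.logb 2 (r A (ω.1 \ ω.2)) + Real.logb 2 (n1 ω.1 ω.2 (A ∩ (ω.1 \ ω.2))))
      = (∑ ω ∈ Ω, ∑ A ∈ 𝓐, (-Real.logb 2 (r A (ω.1 \ ω.2))))
        + ∑ ω ∈ Ω, ∑ A ∈ 𝓐, Real.logb 2 (n1 ω.1 ω.2 (A ∩ (ω.1 \ ω.2))) := by
    rw [← Finset.sum_add_distrib]
    refine Finset.sum_congr rfl fun ω _ => ?_
    rw [← Finset.sum_add_distrib]
  have hn1bound : ∑ ω ∈ Ω, ∑ A ∈ 𝓐, Real.logb 2 (n1 ω.1 ω.2 (A ∩ (ω.1 \ ω.2)))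
      ≤ N * ((N * M) * (Real.logb 2 (N * M) - k * Real.logb 2 θ))
        + N * ((N * M) * ∑ i ∈ X, binEnt (c i) - (N * M) * Real.logb 2 (N * M)) := by
    have h1 : ∑ ω ∈ Ω, ∑ A ∈ 𝓐, Real.logb 2 (n1 ω.1 ω.2 (A ∩ (ω.1 \ ω.2)))
        ≤ ∑ ω ∈ Ω, ∑ A ∈ 𝓐,
          (Real.logb 2 (N * M) - k * Real.logb 2 θ - Real.logb 2 (n2 ω.1 ω.2)) := by
      refine Finset.sum_le_sum fun ω hω => Finset.sum_le_sum fun A hAm => ?_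
      exact stepC ω hω A hAm
    refine h1.trans ?_
    have h2 : ∀ ω ∈ Ω, ∑ A ∈ 𝓐,
        (Real.logb 2 (N * M) - k * Real.logb 2 θ - Real.logb 2 (n2 ω.1 ω.2))
        = N * (Real.logb 2 (N * M) - k * Real.logb 2 θ) + N * (-Real.logb 2 (n2 ω.1 ω.2)) := by
      intro ω _
      rw [Finset.sum_const, nsmul_eq_mul]
      ring
    rw [Finset.sum_congr rfl h2, Finset.sum_add_distrib, Finset.sum_const, nsmul_eq_mul,
      ← Finset.mul_sum, hΩcard]
    have hD := mul_le_mul_of_nonneg_left stepD hN.le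
    nlinarith [hD]
  -- final
  have hfinal : Real.logb 2 N ≤ ∑ i ∈ X, c i * binEnt (a i) + ∑ i ∈ X, binEnt (c i)
      - k * Real.logb 2 θ := by
    have h := hsumA
    rw [hsplit, stepB] at h
    have h2 := hn1bound
    have hpos : 0 < N * (N * M) := mul_pos hN (mul_pos hN hM)
    have hcomb : (N * (N * M)) * Real.logb 2 N
        ≤ (N * (N * M)) * (∑ i ∈ X, c i * binEnt (a i) + ∑ i ∈ X, binEnt (c i)
          - k * Real.logb 2 θ) := by nlinarith [h, h2]
    exact le_of_mul_le_mul_left hcomb hpos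
  rw [hNdef] at hfinal
  refine hfinal.trans ?_
  have hexp : ∑ i ∈ X, fFun (a i) (b i) θ
      = ∑ i ∈ X, (c i * binEnt (a i) + binEnt (c i) - a i * Real.logb 2 θ) := by
    refine Finset.sum_congr rfl fun i _ => ?_
    unfold fFun
    rw [hcdef]
  rw [hexp, Finset.sum_sub_distrib, Finset.sum_add_distrib, ← Finset.sum_mul, hsum_a]

theorem stmt_17 (X : Finset ℕ) (𝓐 𝓑 : Finset (Finset ℕ)) (k : ℕ)
    (hrec : IsRecoveringPair X 𝓐 𝓑) (huni : IsUniformPair k 𝓐 𝓑)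
    (hA : 𝓐.Nonempty) (hB : 𝓑.Nonempty) (θ : ℝ) (hθ : 0 < θ)
    (a b : ℕ → ℝ)
    (ha : ∀ i, a i = ((𝓐.filter fun A => i ∈ A).card : ℝ) / 𝓐.card)
    (hb : ∀ i, b i = ((𝓑.filter fun B => i ∈ B).card : ℝ) / 𝓑.card)
    (hfil₁ : ∀ A ∈ 𝓐, ∀ B ∈ 𝓑, ∀ P₁ ⊆ A \ B,
      ((filteredA 𝓐 A (A \ B) P₁).card * (filteredB 𝓑 A (A \ B)).card : ℝ)
        ≤ θ ^ (-(k : ℤ)) * (𝓐.card * 𝓑.card))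
    (hfil₂ : ∀ A ∈ 𝓐, ∀ B ∈ 𝓑, ∀ P₂ ⊆ B \ A,
      ((filteredA 𝓑 B (B \ A) P₂).card * (filteredB 𝓐 B (B \ A)).card : ℝ)
        ≤ θ ^ (-(k : ℤ)) * (𝓐.card * 𝓑.card)) :
    Real.logb 2 (𝓐.card * 𝓑.card) ≤ ∑ i ∈ X, gFun (a i) (b i) θ := by
  obtain ⟨hXA, hXB, hrec3, hrec4⟩ := hrec
  obtain ⟨hcA, hcB⟩ := huni
  have h1 := main_side X 𝓐 𝓑 k hXA hcA hrec3 hA hB θ hθ a b ha hb hfil₁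
  have hrec4' : ∀ B ∈ 𝓑, ∀ B' ∈ 𝓑, ∀ A ∈ 𝓐, ∀ A' ∈ 𝓐, B \ A = B' \ A' → B = B' :=
    fun B hB' B' hB'' A hA' A' hA'' h => hrec4 A hA' A' hA'' B hB' B' hB'' h
  have hfil₂' : ∀ B ∈ 𝓑, ∀ A ∈ 𝓐, ∀ P ⊆ B \ A,
      ((filteredA 𝓑 B (B \ A) P).card * (filteredB 𝓐 B (B \ A)).card : ℝ)
        ≤ θ ^ (-(k : ℤ)) * (𝓑.card * 𝓐.card) := by
    intro B hB' A hA' P hP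
    have := hfil₂ A hA' B hB' P hP
    linarith [this, mul_comm (𝓐.card : ℝ) (𝓑.card : ℝ)]
  have h2 := main_side X 𝓑 𝓐 k hXB hcB hrec4' hB hA θ hθ b a hb ha hfil₂'
  have hNpos : (0:ℝ) < 𝓐.card := by exact_mod_cast Finset.card_pos.mpr hA
  have hMpos : (0:ℝ) < 𝓑.card := by exact_mod_cast Finset.card_pos.mpr hB
  have hsplit : Real.logb 2 ((𝓐.card : ℝ) * (𝓑.card : ℝ))
      = Real.logb 2 (𝓐.card : ℝ) + Real.logb 2 (𝓑.card : ℝ) :=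
    Real.logb_mul hNpos.ne' hMpos.ne'
  have hg : ∑ i ∈ X, gFun (a i) (b i) θ
      = ∑ i ∈ X, fFun (a i) (b i) θ + ∑ i ∈ X, fFun (b i) (a i) θ := by
    rw [← Finset.sum_add_distrib]
    exact Finset.sum_congr rfl fun i _ => rfl
  rw [hg]
  push_cast
  rw [hsplit]
  exact add_le_add h1 h2
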